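/- Let E be a Banach space with separable dual E* and let μ be a probability measure on E with ∫‖x‖ dμ(x) < ∞ and ∫ x dμ(x) = 0. Let X₁,…,Xₙ be i.i.d. random elements of E sampled from μ and let ε₁,…,εₙ be i.i.d. uniform ±1 random variables independent from X₁,…,Xₙ. Then 𝔼 W₁,₁(μ, (1/n)∑ᵢ δ_{Xᵢ}) ≥ (1/(2n))·𝔼‖∑ᵢ εᵢ Xᵢ‖. -/

import Mathlib

open MeasureTheory ProbabilityTheory
open scoped ENNReal NNReal RealInnerProductSpace

noncomputable section

/-- Max-sliced 1-Wasserstein distance on a Banach space, via the dual unit ball and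
1-Lipschitz test functions. -/
def W11Banach (E : Type*) [NormedAddCommGroup E] [NormedSpace ℝ E] [MeasurableSpace E]
    (μ₁ μ₂ : Measure E) : ℝ≥0∞ :=
  ⨆ (v : {v : E →L[ℝ] ℝ // ‖v‖ ≤ 1}) (f : {f : ℝ → ℝ // LipschitzWith 1 f}),
    ENNReal.ofReal |(∫ x, f.1 (v.1 x) ∂μ₁) - ∫ x, f.1 (v.1 x) ∂μ₂|

/-- The empirical measure of the points `Y 0, …, Y (n-1)`. -/
def empirical {E : Type*} [MeasurableSpace E] (n : ℕ) (Y : Fin n → E) : Measure E :=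
  (n : ℝ≥0∞)⁻¹ • ∑ i, Measure.dirac (Y i)

/-- The distribution of a uniform ±1 (Rademacher) random variable. -/
def rademacher : Measure ℝ := (2 : ℝ≥0∞)⁻¹ • (Measure.dirac (1 : ℝ) + Measure.dirac (-1 : ℝ))

section Aux

open Set in
theorem sep_of_dual_sep (E : Type*) [NormedAddCommGroup E] [NormedSpace ℝ E]
    [TopologicalSpace.SeparableSpace (E →L[ℝ] ℝ)] :
    TopologicalSpace.SeparableSpace E := by
  classical
  obtain ⟨D, Dcount, Ddense⟩ := TopologicalSpace.exists_countable_dense (E →L[ℝ] ℝ)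
  have hch : ∀ v : E →L[ℝ] ℝ, ∃ x : E, ‖x‖ ≤ 1 ∧ ‖v‖ / 2 ≤ v x := by
    intro v
    rcases eq_or_ne v 0 with hv | hv
    · exact ⟨0, by simp [hv]⟩
    · have hlt : ‖v‖ / 2 < ‖v‖ := by
        have : (0:ℝ) < ‖v‖ := norm_pos_iff.2 hv
        linarith
      obtain ⟨x, hx1, hx2⟩ := v.exists_lt_apply_of_lt_opNorm hlt
      rcases le_or_gt 0 (v x) with h | h
      · exact ⟨x, hx1.le, by rw [Real.norm_eq_abs, abs_of_nonneg h] at hx2; linarith⟩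
      · refine ⟨-x, by simpa using hx1.le, ?_⟩
        rw [ContinuousLinearMap.map_neg]
        rw [Real.norm_eq_abs, abs_of_neg h] at hx2
        linarith
  choose g hg1 hg2 using hch
  set s : Set E := g '' D with hs
  have scount : s.Countable := Dcount.image g
  set M : Submodule ℝ E := (Submodule.span ℝ s).topologicalClosure with hM
  have hMsep : TopologicalSpace.IsSeparable (M : Set E) := by
    rw [hM, Submodule.topologicalClosure_coe]
    exact (scount.isSeparable.span).closure
  have hMtop : (M : Set E) = univ := by
    by_contra h
    obtain ⟨y, hy⟩ := (ne_univ_iff_exists_notMem _).1 h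
    obtain ⟨f, u, hfu, hfy⟩ := geometric_hahn_banach_closed_point
      M.convex ((Submodule.span ℝ s).isClosed_topologicalClosure) hy
    have hf0 : ∀ a ∈ M, f a = 0 := by
      intro a ha
      by_contra hfa
      have h2 : f (((u + 1) / f a) • a) < u := hfu _ (M.smul_mem _ ha)
      rw [ContinuousLinearMap.map_smul] at h2
      simp only [smul_eq_mul] at h2
      rw [div_mul_cancel₀ _ hfa] at h2
      linarith
    have hu0 : 0 < u := by simpa using hfu 0 M.zero_mem
    have hfne : f ≠ 0 := by
      intro h0
      rw [h0] at hfy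
      simp only [ContinuousLinearMap.zero_apply] at hfy
      linarith
    have hfnorm : (0:ℝ) < ‖f‖ := norm_pos_iff.2 hfne
    obtain ⟨v, hvD, hvd⟩ := Ddense.exists_dist_lt f (by positivity : (0:ℝ) < ‖f‖/4)
    have hvf : ‖v - f‖ < ‖f‖ / 4 := by rwa [← dist_eq_norm, dist_comm]
    have hvnorm : (3/4 : ℝ) * ‖f‖ < ‖v‖ := by
      have : ‖f‖ ≤ ‖v‖ + ‖v - f‖ := by
        calc ‖f‖ = ‖v - (v - f)‖ := by rw [sub_sub_cancel]
        _ ≤ ‖v‖ + ‖v - f‖ := norm_sub_le _ _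
      linarith
    have hgvM : g v ∈ M := by
      apply Submodule.le_topologicalClosure
      exact Submodule.subset_span ⟨v, hvD, rfl⟩
    have hfgv : f (g v) = 0 := hf0 _ hgvM
    have hbound : v (g v) ≤ ‖f‖ / 4 := by
      have : v (g v) = (v - f) (g v) := by simp [hfgv]
      rw [this]
      calc (v - f) (g v) ≤ ‖(v - f) (g v)‖ := le_abs_self _
        _ ≤ ‖v - f‖ * ‖g v‖ := (v - f).le_opNorm _
        _ ≤ ‖v - f‖ * 1 := by
            apply mul_le_mul_of_nonneg_left (hg1 v) (norm_nonneg _)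
        _ ≤ ‖f‖ / 4 := by linarith
    have := hg2 v
    linarith
  have : TopologicalSpace.IsSeparable (univ : Set E) := hMtop ▸ hMsep
  exact TopologicalSpace.isSeparable_univ_iff.1 this

theorem norm_exp_le_of_indep {Ω E : Type*} [MeasurableSpace Ω]
    [NormedAddCommGroup E] [NormedSpace ℝ E] [CompleteSpace E]
    [MeasurableSpace E] [BorelSpace E] [SecondCountableTopology E]
    (P : Measure Ω) [IsProbabilityMeasure P]
    (Y Z : Ω → E) (hY : Measurable Y) (hZ : Measurable Z)
    (hYi : Integrable Y P) (hZi : Integrable Z P)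
    (hZ0 : (∫ ω, Z ω ∂P) = 0) (h : IndepFun Y Z P) :
    (∫ ω, ‖Y ω‖ ∂P) ≤ ∫ ω, ‖Y ω + Z ω‖ ∂P := by
  set νY := Measure.map Y P with hνY
  set νZ := Measure.map Z P with hνZ
  haveI : IsProbabilityMeasure νY := Measure.isProbabilityMeasure_map hY.aemeasurable
  haveI : IsProbabilityMeasure νZ := Measure.isProbabilityMeasure_map hZ.aemeasurable
  have hprod : Measure.map (fun ω => (Y ω, Z ω)) P = νY.prod νZ :=
    (indepFun_iff_map_prod_eq_prod_map_map hY.aemeasurable hZ.aemeasurable).1 h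
  have hpairm : Measurable (fun ω => (Y ω, Z ω)) := hY.prodMk hZ
  have hFc : Continuous (fun p : E × E => ‖p.1 + p.2‖) := by fun_prop
  have hFi : Integrable (fun p : E × E => ‖p.1 + p.2‖) (νY.prod νZ) := by
    rw [← hprod]
    rw [integrable_map_measure (by rw [hprod]; exact hFc.stronglyMeasurable.aestronglyMeasurable)
      hpairm.aemeasurable]
    exact (hYi.add hZi).norm
  have step1 : (∫ ω, ‖Y ω + Z ω‖ ∂P) = ∫ p, ‖p.1 + p.2‖ ∂(νY.prod νZ) := by
    rw [← hprod, integral_map hpairm.aemeasurable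
      (by rw [hprod]; exact hFc.stronglyMeasurable.aestronglyMeasurable)]
  have step2 : (∫ p, ‖p.1 + p.2‖ ∂(νY.prod νZ)) = ∫ x, ∫ y, ‖x + y‖ ∂νZ ∂νY :=
    integral_prod _ hFi
  have hZid : Integrable (fun z : E => z) νZ :=
    (integrable_map_measure stronglyMeasurable_id.aestronglyMeasurable hZ.aemeasurable).2 hZi
  have hZmean : (∫ z, z ∂νZ) = 0 := by
    have : (∫ z, z ∂νZ) = ∫ ω, Z ω ∂P :=
      integral_map hZ.aemeasurable stronglyMeasurable_id.aestronglyMeasurable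
    rw [this, hZ0]
  have inner : ∀ x : E, ‖x‖ ≤ ∫ y, ‖x + y‖ ∂νZ := by
    intro x
    have h1 : (∫ y, (x + y) ∂νZ) = x := by
      rw [integral_add (integrable_const x) hZid, integral_const, hZmean]
      simp
    calc ‖x‖ = ‖∫ y, (x + y) ∂νZ‖ := by rw [h1]
      _ ≤ ∫ y, ‖x + y‖ ∂νZ := norm_integral_le_integral_norm _
  have hnormYi : Integrable (fun x : E => ‖x‖) νY :=
    (integrable_map_measure (stronglyMeasurable_id.norm).aestronglyMeasurable
      hY.aemeasurable).2 hYi.norm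
  have outer : (∫ x, ‖x‖ ∂νY) ≤ ∫ x, ∫ y, ‖x + y‖ ∂νZ ∂νY :=
    integral_mono hnormYi hFi.integral_prod_left inner
  have hYnorm : (∫ x, ‖x‖ ∂νY) = ∫ ω, ‖Y ω‖ ∂P :=
    integral_map hY.aemeasurable (stronglyMeasurable_id.norm).aestronglyMeasurable
  rw [← hYnorm, step1, step2]
  exact outer

theorem W11_ge (E : Type) [NormedAddCommGroup E] [NormedSpace ℝ E] [CompleteSpace E]
    [MeasurableSpace E] [BorelSpace E]
    (μ : Measure E) [IsProbabilityMeasure μ]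
    (hid : Integrable (fun x : E => x) μ) (hmean : (∫ x, x ∂μ) = 0)
    (n : ℕ) (Y : Fin n → E) :
    ENNReal.ofReal ((n : ℝ)⁻¹ * ‖∑ i, Y i‖) ≤ W11Banach E μ (empirical n Y) := by
  obtain ⟨v, hv1, hv2'⟩ := exists_dual_vector'' ℝ (∑ i, Y i)
  have hv2 : v (∑ i, Y i) = ‖∑ i, Y i‖ := by exact_mod_cast hv2'
  have hvm : StronglyMeasurable (fun x : E => v x) :=
    (v.continuous.measurable).stronglyMeasurable
  have hdint : ∀ a : E, Integrable (fun x => v x) (Measure.dirac a) := by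
    intro a
    refine ⟨hvm.aestronglyMeasurable, ?_⟩
    simp only [HasFiniteIntegral, lintegral_dirac' a (by fun_prop : Measurable (fun x : E => ‖v x‖ₑ))]
    exact enorm_lt_top
  have hμside : (∫ x, v x ∂μ) = 0 := by
    rw [v.integral_comp_comm hid, hmean, map_zero]
  have hempside : (∫ x, v x ∂(empirical n Y)) = (n:ℝ)⁻¹ * ∑ i, v (Y i) := by
    rw [empirical, integral_smul_measure, integral_finset_sum_measure]
    · simp only [integral_dirac' _ _ hvm]
      rw [ENNReal.toReal_inv, ENNReal.toReal_natCast, smul_eq_mul]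
    · exact fun i _ => hdint (Y i)
  have key : ENNReal.ofReal ((n : ℝ)⁻¹ * ‖∑ i, Y i‖)
      = ENNReal.ofReal |(∫ x, (id : ℝ → ℝ) (v x) ∂μ) - ∫ x, (id : ℝ → ℝ) (v x) ∂(empirical n Y)| := by
    simp only [id_eq]
    rw [hμside, hempside, ← map_sum v Y Finset.univ, hv2, zero_sub, abs_neg,
      abs_of_nonneg (by positivity)]
  rw [key]
  exact le_iSup_of_le ⟨v, hv1⟩ (le_iSup_of_le ⟨id, LipschitzWith.id⟩ le_rfl)

end Aux

/-- Lower bound for the expected max-sliced 1-Wasserstein distance between a centered measure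
on a Banach space and its empirical distribution (Proposition 2.11 of the paper). -/
theorem max_sliced_W1_banach_lower
    (E : Type) [NormedAddCommGroup E] [NormedSpace ℝ E] [CompleteSpace E]
    [MeasurableSpace E] [BorelSpace E] [TopologicalSpace.SeparableSpace (E →L[ℝ] ℝ)]
    (μ : Measure E) [IsProbabilityMeasure μ]
    (hint : Integrable (fun x => ‖x‖) μ) (hmean : (∫ x, x ∂μ) = 0)
    (n : ℕ) (hn : 0 < n)
    (Ω : Type) [MeasurableSpace Ω] (P : Measure Ω) [IsProbabilityMeasure P]
    (X : Fin n → Ω → E) (ε : Fin n → Ω → ℝ)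
    (hXm : ∀ i, Measurable (X i)) (hεm : ∀ i, Measurable (ε i))
    (hXd : ∀ i, Measure.map (X i) P = μ)
    (hεd : ∀ i, Measure.map (ε i) P = rademacher)
    (hXi : iIndepFun X P)
    (hεi : iIndepFun ε P)
    (hind : IndepFun (fun ω => (fun i => ε i ω)) (fun ω => (fun i => X i ω)) P) :
    (2 * (n : ℝ≥0∞))⁻¹ * ∫⁻ ω, ENNReal.ofReal ‖∑ i, ε i ω • X i ω‖ ∂P
      ≤ ∫⁻ ω, W11Banach E μ (empirical n fun i => X i ω) ∂P := by
  classical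
  haveI : TopologicalSpace.SeparableSpace E := sep_of_dual_sep E
  haveI : SecondCountableTopology E := UniformSpace.secondCountable_of_separable E
  -- integrability of the identity under μ
  have hidμ : Integrable (fun x : E => x) μ :=
    (integrable_norm_iff stronglyMeasurable_id.aestronglyMeasurable).1 hint
  have hXint : ∀ i, Integrable (X i) P := by
    intro i
    have h1 : Integrable (fun x : E => x) (Measure.map (X i) P) := by rw [hXd i]; exact hidμ
    exact (integrable_map_measure stronglyMeasurable_id.aestronglyMeasurable
      (hXm i).aemeasurable).1 h1
  have hX0 : ∀ i, (∫ ω, X i ω ∂P) = 0 := by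
    intro i
    have h1 : (∫ x, x ∂(Measure.map (X i) P)) = ∫ ω, X i ω ∂P :=
      integral_map (hXm i).aemeasurable stronglyMeasurable_id.aestronglyMeasurable
    rw [hXd i, hmean] at h1
    exact h1.symm
  -- the full sum
  set S : Ω → E := fun ω => ∑ i, X i ω with hS
  have hSm : Measurable S := Finset.measurable_sum _ (fun i _ => hXm i)
  have hSi : Integrable S P := integrable_finset_sum _ (fun i _ => hXint i)
  set I : ℝ := ∫ ω, ‖S ω‖ ∂P with hI
  have hInn : 0 ≤ I := integral_nonneg (fun ω => norm_nonneg _)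
  -- Key contraction lemma
  have key : ∀ A : Finset (Fin n), (∫ ω, ‖∑ i ∈ A, X i ω‖ ∂P) ≤ I := by
    intro A
    set Y : Ω → E := fun ω => ∑ i ∈ A, X i ω with hYdef
    set Z : Ω → E := fun ω => ∑ i ∈ Aᶜ, X i ω with hZdef
    have hYm : Measurable Y := Finset.measurable_sum _ (fun i _ => hXm i)
    have hZm : Measurable Z := Finset.measurable_sum _ (fun i _ => hXm i)
    have hYi : Integrable Y P := integrable_finset_sum _ (fun i _ => hXint i)
    have hZi : Integrable Z P := integrable_finset_sum _ (fun i _ => hXint i)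
    have hZ0 : (∫ ω, Z ω ∂P) = 0 := by
      rw [hZdef]
      rw [integral_finset_sum _ (fun i _ => hXint i)]
      simp [hX0]
    have hYZindep : IndepFun Y Z P := by
      have h1 := hXi.indepFun_finset A Aᶜ disjoint_compl_right hXm
      have h2 : Measurable (fun v : {i // i ∈ A} → E => ∑ i, v i) :=
        Finset.measurable_sum _ (fun i _ => measurable_pi_apply i)
      have h3 : Measurable (fun v : {i // i ∈ Aᶜ} → E => ∑ i, v i) :=
        Finset.measurable_sum _ (fun i _ => measurable_pi_apply i)
      have h4 := h1.comp h2 h3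
      have e1 : ((fun v : {i // i ∈ A} → E => ∑ i, v i)
          ∘ (fun a (i : {i // i ∈ A}) => X i a)) = Y := by
        funext a
        simp only [Function.comp_apply, hYdef]
        exact Finset.sum_coe_sort A (fun i => X i a)
      have e2 : ((fun v : {i // i ∈ Aᶜ} → E => ∑ i, v i)
          ∘ (fun a (i : {i // i ∈ Aᶜ}) => X i a)) = Z := by
        funext a
        simp only [Function.comp_apply, hZdef]
        exact Finset.sum_coe_sort Aᶜ (fun i => X i a)
      rwa [e1, e2] at h4
    have hsum : ∀ ω, Y ω + Z ω = S ω := by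
      intro ω
      rw [hYdef, hZdef, hS]
      exact Finset.sum_add_sum_compl A (fun i => X i ω)
    calc (∫ ω, ‖Y ω‖ ∂P) ≤ ∫ ω, ‖Y ω + Z ω‖ ∂P :=
          norm_exp_le_of_indep P Y Z hYm hZm hYi hZi hZ0 hYZindep
      _ = I := by rw [hI]; congr 1; funext ω; rw [hsum]
  -- ±1 values a.e.
  have hBmeas : MeasurableSet ({1, -1} : Set ℝ) := by measurability
  have hPae : ∀ᵐ ω ∂P, ∀ i, ε i ω ∈ ({1, -1} : Set ℝ) := by
    rw [ae_all_iff]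
    intro i
    have h1 : P (ε i ⁻¹' ({1, -1} : Set ℝ)ᶜ) = 0 := by
      have h2 : Measure.map (ε i) P (({1, -1} : Set ℝ)ᶜ) = P (ε i ⁻¹' ({1, -1} : Set ℝ)ᶜ) :=
        Measure.map_apply (hεm i) hBmeas.compl
      rw [hεd i] at h2
      rw [← h2]
      have : rademacher (({1, -1} : Set ℝ)ᶜ) = 0 := by
        rw [rademacher, Measure.smul_apply, Measure.add_apply,
          Measure.dirac_apply' _ hBmeas.compl, Measure.dirac_apply' _ hBmeas.compl]
        simp
      exact this
    rw [ae_iff]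
    exact h1
  -- vector-valued maps
  set εv : Ω → (Fin n → ℝ) := fun ω i => ε i ω with hεv
  set Xv : Ω → (Fin n → E) := fun ω i => X i ω with hXv
  have hεvm : Measurable εv := measurable_pi_lambda _ (fun i => hεm i)
  have hXvm : Measurable Xv := measurable_pi_lambda _ (fun i => hXm i)
  set ν : Measure (Fin n → ℝ) := Measure.map εv P with hν
  set κ : Measure (Fin n → E) := Measure.map Xv P with hκ
  haveI : IsProbabilityMeasure ν := Measure.isProbabilityMeasure_map hεvm.aemeasurable
  haveI : IsProbabilityMeasure κ := Measure.isProbabilityMeasure_map hXvm.aemeasurable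
  have hprod : Measure.map (fun ω => (εv ω, Xv ω)) P = ν.prod κ :=
    (indepFun_iff_map_prod_eq_prod_map_map hεvm.aemeasurable hXvm.aemeasurable).1 hind
  set g : (Fin n → ℝ) × (Fin n → E) → ℝ≥0∞ :=
    fun p => ENNReal.ofReal ‖∑ i, p.1 i • p.2 i‖ with hg
  have hgm : Measurable g := by
    apply Measurable.ennreal_ofReal
    apply Measurable.norm
    apply Finset.measurable_sum
    intro i _
    exact ((measurable_pi_apply i).comp measurable_fst).smul
      ((measurable_pi_apply i).comp measurable_snd)
  have hpairm : Measurable (fun ω => (εv ω, Xv ω)) := hεvm.prodMk hXvm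
  have step1 : (∫⁻ ω, ENNReal.ofReal ‖∑ i, ε i ω • X i ω‖ ∂P)
      = ∫⁻ e, ∫⁻ x, g (e, x) ∂κ ∂ν := by
    have h1 : (∫⁻ p, g p ∂(Measure.map (fun ω => (εv ω, Xv ω)) P))
        = ∫⁻ ω, g (εv ω, Xv ω) ∂P := lintegral_map hgm hpairm
    rw [hprod] at h1
    rw [← lintegral_prod g hgm.aemeasurable, h1]
  -- a.e. sign vectors
  have hG : ∀ᵐ e ∂ν, ∀ i, e i ∈ ({1, -1} : Set ℝ) := by
    have hGset : MeasurableSet {e : Fin n → ℝ | ∀ i, e i ∈ ({1, -1} : Set ℝ)} := by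
      rw [Set.setOf_forall]
      exact MeasurableSet.iInter fun i => (measurable_pi_apply i) hBmeas
    rw [hν]
    exact (ae_map_iff hεvm.aemeasurable hGset).2 hPae
  -- inner bound for fixed sign vector
  have inner : ∀ e : Fin n → ℝ, (∀ i, e i ∈ ({1, -1} : Set ℝ)) →
      (∫⁻ x, g (e, x) ∂κ) ≤ ENNReal.ofReal (2 * I) := by
    intro e he
    have hback : (∫⁻ x, g (e, x) ∂κ) = ∫⁻ ω, ENNReal.ofReal ‖∑ i, e i • X i ω‖ ∂P := by
      rw [hκ]
      exact lintegral_map (hgm.comp (measurable_prodMk_left)) hXvm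
    rw [hback]
    set A : Finset (Fin n) := Finset.univ.filter (fun i => e i = 1) with hA
    set Y : Ω → E := fun ω => ∑ i ∈ A, X i ω with hYdef
    set Z : Ω → E := fun ω => ∑ i ∈ Aᶜ, X i ω with hZdef
    have hYm : Measurable Y := Finset.measurable_sum _ (fun i _ => hXm i)
    have hZm : Measurable Z := Finset.measurable_sum _ (fun i _ => hXm i)
    have hYi : Integrable Y P := integrable_finset_sum _ (fun i _ => hXint i)
    have hZi : Integrable Z P := integrable_finset_sum _ (fun i _ => hXint i)
    have hsplit : ∀ ω, (∑ i, e i • X i ω) = Y ω - Z ω := by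
      intro ω
      rw [hYdef, hZdef]
      have hAc : Aᶜ = Finset.univ.filter (fun i => ¬ (e i = 1)) := by
        rw [hA, Finset.compl_filter]
      rw [← Finset.sum_filter_add_sum_filter_not Finset.univ (fun i => e i = 1)
        (fun i => e i • X i ω), hAc]
      have h1 : (∑ i ∈ Finset.univ.filter (fun i => e i = 1), e i • X i ω)
          = ∑ i ∈ A, X i ω := by
        apply Finset.sum_congr rfl
        intro i hi
        rw [Finset.mem_filter] at hi
        rw [hi.2, one_smul]
      have h2 : (∑ i ∈ Finset.univ.filter (fun i => ¬ (e i = 1)), e i • X i ω)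
          = -∑ i ∈ Finset.univ.filter (fun i => ¬ (e i = 1)), X i ω := by
        rw [← Finset.sum_neg_distrib]
        apply Finset.sum_congr rfl
        intro i hi
        rw [Finset.mem_filter] at hi
        have : e i = -1 := by
          rcases he i with h | h
          · exact absurd h hi.2
          · exact h
        rw [this, neg_one_smul]
      rw [h1, h2, hA, ← sub_eq_add_neg]
    have hmono : (∫⁻ ω, ENNReal.ofReal ‖∑ i, e i • X i ω‖ ∂P)
        ≤ (∫⁻ ω, ENNReal.ofReal ‖Y ω‖ ∂P) + ∫⁻ ω, ENNReal.ofReal ‖Z ω‖ ∂P := by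
      rw [← lintegral_add_left (by fun_prop : Measurable (fun ω => ENNReal.ofReal ‖Y ω‖))]
      apply lintegral_mono
      intro ω
      dsimp only
      rw [hsplit ω, ← ENNReal.ofReal_add (norm_nonneg _) (norm_nonneg _)]
      exact ENNReal.ofReal_le_ofReal (norm_sub_le _ _)
    have hYlint : (∫⁻ ω, ENNReal.ofReal ‖Y ω‖ ∂P) = ENNReal.ofReal (∫ ω, ‖Y ω‖ ∂P) :=
      (ofReal_integral_eq_lintegral_ofReal hYi.norm
        (Filter.Eventually.of_forall fun ω => norm_nonneg _)).symm
    have hZlint : (∫⁻ ω, ENNReal.ofReal ‖Z ω‖ ∂P) = ENNReal.ofReal (∫ ω, ‖Z ω‖ ∂P) :=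
      (ofReal_integral_eq_lintegral_ofReal hZi.norm
        (Filter.Eventually.of_forall fun ω => norm_nonneg _)).symm
    calc (∫⁻ ω, ENNReal.ofReal ‖∑ i, e i • X i ω‖ ∂P)
        ≤ (∫⁻ ω, ENNReal.ofReal ‖Y ω‖ ∂P) + ∫⁻ ω, ENNReal.ofReal ‖Z ω‖ ∂P := hmono
      _ = ENNReal.ofReal (∫ ω, ‖Y ω‖ ∂P) + ENNReal.ofReal (∫ ω, ‖Z ω‖ ∂P) := by
          rw [hYlint, hZlint]
      _ ≤ ENNReal.ofReal I + ENNReal.ofReal I := by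
          exact add_le_add (ENNReal.ofReal_le_ofReal (key A)) (ENNReal.ofReal_le_ofReal (key Aᶜ))
      _ = ENNReal.ofReal (2 * I) := by
          rw [← ENNReal.ofReal_add hInn hInn, two_mul]
  -- combine: LHS lintegral ≤ ofReal (2I)
  have hLHS : (∫⁻ ω, ENNReal.ofReal ‖∑ i, ε i ω • X i ω‖ ∂P) ≤ ENNReal.ofReal (2 * I) := by
    rw [step1]
    calc (∫⁻ e, ∫⁻ x, g (e, x) ∂κ ∂ν) ≤ ∫⁻ _, ENNReal.ofReal (2 * I) ∂ν := by
          apply lintegral_mono_ae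
          filter_upwards [hG] with e he
          exact inner e he
      _ = ENNReal.ofReal (2 * I) := by rw [lintegral_const, measure_univ, mul_one]
  -- RHS lower bound
  have hRHS : (n : ℝ≥0∞)⁻¹ * ENNReal.ofReal I
      ≤ ∫⁻ ω, W11Banach E μ (empirical n fun i => X i ω) ∂P := by
    have h1 : ∀ ω, ENNReal.ofReal ((n : ℝ)⁻¹ * ‖S ω‖)
        ≤ W11Banach E μ (empirical n fun i => X i ω) := by
      intro ω
      exact W11_ge E μ hidμ hmean n (fun i => X i ω)
    calc (n : ℝ≥0∞)⁻¹ * ENNReal.ofReal I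
        = (n : ℝ≥0∞)⁻¹ * ∫⁻ ω, ENNReal.ofReal ‖S ω‖ ∂P := by
          rw [hI, ofReal_integral_eq_lintegral_ofReal hSi.norm
            (Filter.Eventually.of_forall fun ω => norm_nonneg _)]
      _ = ∫⁻ ω, (n : ℝ≥0∞)⁻¹ * ENNReal.ofReal ‖S ω‖ ∂P := by
          rw [lintegral_const_mul _ (by fun_prop : Measurable (fun ω => ENNReal.ofReal ‖S ω‖))]
      _ = ∫⁻ ω, ENNReal.ofReal ((n : ℝ)⁻¹ * ‖S ω‖) ∂P := by
          congr 1; funext ω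
          rw [ENNReal.ofReal_mul (by positivity)]
          congr 1
          rw [← ENNReal.ofReal_natCast n, ← ENNReal.ofReal_inv_of_pos (by exact_mod_cast hn)]
      _ ≤ ∫⁻ ω, W11Banach E μ (empirical n fun i => X i ω) ∂P := lintegral_mono h1
  -- final arithmetic
  calc (2 * (n : ℝ≥0∞))⁻¹ * ∫⁻ ω, ENNReal.ofReal ‖∑ i, ε i ω • X i ω‖ ∂P
      ≤ (2 * (n : ℝ≥0∞))⁻¹ * ENNReal.ofReal (2 * I) := by
        exact mul_le_mul_right hLHS _
    _ = (n : ℝ≥0∞)⁻¹ * ENNReal.ofReal I := by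
        rw [ENNReal.mul_inv (Or.inl (by norm_num)) (Or.inl (by norm_num)),
          ENNReal.ofReal_mul (by norm_num : (0:ℝ) ≤ 2)]
        rw [mul_mul_mul_comm, ENNReal.ofReal_ofNat,
          ENNReal.inv_mul_cancel (by norm_num) (by norm_num), one_mul]
    _ ≤ ∫⁻ ω, W11Banach E μ (empirical n fun i => X i ω) ∂P := hRHS

end
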